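/- For every bound function α : X → ℕ, the set of regions with respect to α is a finite partition of the set of all clock valuations (ℝ≥0)^X: the regions are pairwise disjoint, every valuation belongs to some region, every region is non-empty, and there are finitely many regions. -/

import Mathlib

attribute [local instance] Classical.propDecidable

noncomputable section

namespace TAform

/-! ### Weights `(≼, c)` with `c ∈ ℤ ∪ {∞}` -/

/-- Values in `ℤ ∪ {∞}`: `none` represents `∞`. -/
abbrev OVal := Option ℤ

/-- Addition on `ℤ ∪ {∞}`. -/
def ovAdd : OVal → OVal → OVal
  | some a, some b => some (a + b)
  | _, _ => none

/-- Strict order on `ℤ ∪ {∞}`. -/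
def ovLt : OVal → OVal → Prop
  | some a, some b => a < b
  | some _, none => True
  | none, _ => False

/-- A weight `(≼, c)`: `strict = true` means `≼` is `<`, `strict = false` means `≤`;
`val ∈ ℤ ∪ {∞}`. -/
structure Weight where
  strict : Bool
  val : OVal

/-- The weight `(<, ∞)`. -/
def winf : Weight := ⟨true, none⟩

/-- The weight `(≤, c)`. -/
def wle (c : ℤ) : Weight := ⟨false, some c⟩

/-- The weight `(<, c)`. -/
def wlt (c : ℤ) : Weight := ⟨true, some c⟩

/-- Addition: `(≼₁,c₁)+(≼₂,c₂) = (≼,c₁+c₂)` where `≼` is `<` iff `≼₁` or `≼₂` is `<`. -/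
def Weight.add (a b : Weight) : Weight := ⟨a.strict || b.strict, ovAdd a.val b.val⟩

/-- Order: `(≼₁,c₁) < (≼₂,c₂)` iff `c₁ < c₂`, or `c₁ = c₂`, `≼₁` is `<` and `≼₂` is `≤`. -/
def Weight.lt (a b : Weight) : Prop :=
  ovLt a.val b.val ∨ (a.val = b.val ∧ a.strict = true ∧ b.strict = false)

def Weight.le (a b : Weight) : Prop := Weight.lt a b ∨ a = b

/-- Minus: `−(≼,c) = (≼,−c)`. -/
def Weight.neg (w : Weight) : Weight := ⟨w.strict, Option.map (fun c => -c) w.val⟩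

/-- Floor: `⌊(<,c)⌋ = (≤,c−1)` and `⌊(≤,c)⌋ = (≤,c)`. -/
def Weight.floor (w : Weight) : Weight :=
  ⟨false, if w.strict then Option.map (fun c => c - 1) w.val else w.val⟩

/-- Ceiling (on integer-valued weights): `⌈(≤,c)⌉ = (≤,c)` and `⌈(<,c)⌉ = (<,c+1)`. -/
def Weight.ceil (w : Weight) : Weight :=
  if w.strict then ⟨true, Option.map (fun c => c + 1) w.val⟩ else w

/-- Maximum of two weights. -/
def Weight.max (a b : Weight) : Weight := if Weight.lt a b then b else a

/-- Satisfaction: `d ≼ c` for a real number `d` and a weight `(≼,c)`. -/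
def Weight.sat (w : Weight) (d : ℝ) : Prop :=
  match w.val with
  | none => True
  | some c => if w.strict then d < (c : ℝ) else d ≤ (c : ℝ)

/-! ### Distance graphs and their semantics -/

/-- Vertices: clocks of `X` together with the special vertex `x₀` (represented by `none`). -/
abbrev Vtx (X : Type*) := Option X

/-- A distance graph: a weight for every ordered pair of vertices.  The edge
`a →^{≼ c} b` represents the constraint `v b − v a ≼ c`. -/
abbrev DGraph (X : Type*) := Vtx X → Vtx X → Weight

/-- A clock valuation. -/
abbrev Val (X : Type*) := X → ℝ

/-- The valuation is nonnegative (clock valuations map into `ℝ≥0`). -/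
def Nonneg {X : Type*} (v : Val X) : Prop := ∀ x, 0 ≤ v x

/-- Extension of a valuation to all vertices, sending `x₀` to `0`. -/
def extV {X : Type*} (v : Val X) : Vtx X → ℝ
  | none => 0
  | some x => v x

/-- Semantics of a distance graph: the set of nonnegative clock valuations
(with `x₀ = 0`) satisfying all edge constraints. -/
def sem {X : Type*} (G : DGraph X) : Set (Val X) :=
  { v | Nonneg v ∧ ∀ a b, (G a b).sat (extV v b - extV v a) }

/-- Weight of the path `a :: l ++ [b]` in `G` (sum of the weights of its edges). -/
def pathWeight {X : Type*} (G : DGraph X) : Vtx X → List (Vtx X) → Vtx X → Weight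
  | a, [], b => G a b
  | a, c :: l, b => (G a c).add (pathWeight G c l b)

/-- `G` has only positive cycles: no cycle has weight at most `(<,0)`. -/
def OnlyPositiveCycles {X : Type*} (G : DGraph X) : Prop :=
  ∀ (a : Vtx X) (l : List (Vtx X)), ¬ (pathWeight G a l a).le (wlt 0)

/-- Canonical form: the weight of the edge from `a` to `b` is a lower bound of the
weights of all paths from `a` to `b`. -/
def PathCanonical {X : Type*} (G : DGraph X) : Prop :=
  ∀ (a b : Vtx X) (l : List (Vtx X)), (G a b).le (pathWeight G a l b)

/-- The weight `w` bounds the difference `v b − v a` over all `v ∈ S`. -/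
def Bounds {X : Type*} (S : Set (Val X)) (a b : Vtx X) (w : Weight) : Prop :=
  ∀ v ∈ S, w.sat (extV v b - extV v a)

/-- `G` is the canonical distance graph of the set `S`: it represents `S` and each of
its edge weights is the least weight bounding the corresponding difference over `S`
(equivalently, for sets defined by clock constraints, the lower bound of the weights
of paths between its endpoints). -/
def IsCanonGraph {X : Type*} (G : DGraph X) (S : Set (Val X)) : Prop :=
  sem G = S ∧ ∀ a b w, Bounds S a b w → (G a b).le w

/-- A zone: a set of valuations defined by a conjunction of constraints of the form
`x − y # c` or `x # c`, i.e. the set represented by some distance graph. -/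
def IsZone {X : Type*} (Z : Set (Val X)) : Prop := ∃ G : DGraph X, sem G = Z

/-! ### Regions and closure -/

/-- Region equivalence with respect to the bound function `α`: same integer parts
(or both above the bound), same set of clocks with zero fractional part, and the
same ordering of fractional parts of bounded clocks. -/
def regEq {X : Type*} (α : X → ℕ) (v w : Val X) : Prop :=
  (∀ x, ((α x : ℝ) < v x ∧ (α x : ℝ) < w x) ∨
    (⌊v x⌋ = ⌊w x⌋ ∧ (Int.fract (v x) = 0 ↔ Int.fract (w x) = 0))) ∧
  (∀ x y, v x ≤ (α x : ℝ) → v y ≤ (α y : ℝ) →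
    (Int.fract (v x) ≤ Int.fract (v y) ↔ Int.fract (w x) ≤ Int.fract (w y)))

/-- A region with respect to `α`: an equivalence class of region equivalence
(inside the nonnegative valuations). -/
def IsRegion {X : Type*} (α : X → ℕ) (R : Set (Val X)) : Prop :=
  ∃ v : Val X, Nonneg v ∧ R = { w | Nonneg w ∧ regEq α v w }

/-- Closure abstraction: the union of the regions (w.r.t. `α`) intersecting `S`. -/
def Closure {X : Type*} (α : X → ℕ) (S : Set (Val X)) : Set (Val X) :=
  ⋃₀ { R | IsRegion α R ∧ (R ∩ S).Nonempty }

/-! ### LU-bounds and the `Extra⁺_LU` extrapolation -/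

/-- `w > (≤, l)` where `l ∈ ℕ ∪ {−∞}` (`⊥` is `−∞`). -/
def gtLB (w : Weight) (l : WithBot ℕ) : Prop :=
  ∀ n : ℕ, l = (n : WithBot ℕ) → ovLt (some (n : ℤ)) w.val

/-- `−w > (≤, l)` where `l ∈ ℕ ∪ {−∞}`. -/
def negGtLB (w : Weight) (l : WithBot ℕ) : Prop :=
  ∃ c : ℤ, w.val = some c ∧ ∀ n : ℕ, l = (n : WithBot ℕ) → c < -(n : ℤ)

/-- The weight `(<, −u)` for `u ∈ ℕ ∪ {−∞}` (with `(<,∞)` when `u = −∞`). -/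
def wltNeg (u : WithBot ℕ) : Weight :=
  ⟨true, WithBot.recBotCoe none (fun n => some (-(n : ℤ))) u⟩

/-- The `Extra⁺_{LU}` extrapolation, applied edgewise to a distance graph `G`
(the canonical graph of a zone): `Z⁺_{xy} = (<,∞)` if `Z_{xy} > (≤,L_y)`, or
`−Z_{y0} > (≤,L_y)`, or `−Z_{x0} > (≤,U_x)` and `y ≠ x₀`;
`Z⁺_{x0} = (<,−U_x)` if `−Z_{x0} > (≤,U_x)`; and `Z⁺_{xy} = Z_{xy}` otherwise. -/
def extraLU {X : Type*} (L U : X → WithBot ℕ) (G : DGraph X) : DGraph X := fun a b =>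
  match a, b with
  | some x, some y =>
      if gtLB (G (some x) (some y)) (L y) ∨ negGtLB (G (some y) none) (L y) ∨
          negGtLB (G (some x) none) (U x)
      then winf else G (some x) (some y)
  | none, some y =>
      if gtLB (G none (some y)) (L y) ∨ negGtLB (G (some y) none) (L y)
      then winf else G none (some y)
  | some x, none =>
      if negGtLB (G (some x) none) (U x) then wltNeg (U x) else G (some x) none
  | none, none => G none none

/-! ### LU-preorder and its abstraction -/

/-- `l < r` where `l ∈ ℕ ∪ {−∞}` and `r : ℝ`. -/
def lbLtR (l : WithBot ℕ) (r : ℝ) : Prop := ∀ n : ℕ, l = (n : WithBot ℕ) → (n : ℝ) < r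

/-- The LU-preorder `ν' ≼_{LU} ν`: for each clock `x`, either `ν' x = ν x`,
or `L x < ν' x < ν x`, or `U x < ν x < ν' x`. -/
def LUpre {X : Type*} (L U : X → WithBot ℕ) (ν' ν : Val X) : Prop :=
  ∀ x, ν' x = ν x ∨ (lbLtR (L x) (ν' x) ∧ ν' x < ν x) ∨ (lbLtR (U x) (ν x) ∧ ν x < ν' x)

/-- The abstraction `a_{≼LU}(W) = { ν | ∃ ν' ∈ W, ν' ≼_{LU} ν }` (inside the
nonnegative valuations). -/
def aLU {X : Type*} (L U : X → WithBot ℕ) (W : Set (Val X)) : Set (Val X) :=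
  { ν | Nonneg ν ∧ ∃ ν' ∈ W, LUpre L U ν' ν }

/-! ### Guards, transitions, timed automata -/

/-- Comparison operators `# ∈ {<, ≤, =, ≥, >}`. -/
inductive Cmp | lt | le | eq | ge | gt
deriving DecidableEq

/-- Satisfaction of a comparison by real numbers. -/
def Cmp.sat : Cmp → ℝ → ℝ → Prop
  | .lt, a, b => a < b
  | .le, a, b => a ≤ b
  | .eq, a, b => a = b
  | .ge, a, b => a ≥ b
  | .gt, a, b => a > b

/-- A clock constraint (guard): a conjunction (list) of constraints `x # c`, `c ∈ ℕ`. -/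
abbrev Guard (X : Type*) := List (X × Cmp × ℕ)

/-- `v ⊨ g`: every conjunct of the guard holds. -/
def gsat {X : Type*} (v : Val X) (g : Guard X) : Prop :=
  ∀ p ∈ g, Cmp.sat p.2.1 (v p.1) (p.2.2 : ℝ)

/-- `[R]v`: reset the clocks in `R` to `0`, leaving the others unchanged. -/
def resetVal {X : Type*} (R : Set X) (v : Val X) : Val X := Set.indicator Rᶜ v

/-- One step `ν →^{δ,t} ν'` for a transition with guard `g` and reset set `R`:
`ν + δ ⊨ g` and `ν' = [R](ν + δ)`. -/
def step {X : Type*} (g : Guard X) (R : Set X) (δ : ℝ) (ν ν' : Val X) : Prop :=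
  0 ≤ δ ∧ gsat (fun x => ν x + δ) g ∧ ν' = resetVal R (fun x => ν x + δ)

/-- `Post(S,t)`: all valuations reachable by the transition from valuations in `S`. -/
def Post {X : Type*} (g : Guard X) (R : Set X) (S : Set (Val X)) : Set (Val X) :=
  { ν' | ∃ ν ∈ S, ∃ δ : ℝ, step g R δ ν ν' }

/-- A timed automaton `(Q, q₀, X, T, Acc)`. -/
structure TimedAuto (Q X : Type*) where
  init : Q
  trans : Set (Q × Guard X × Set X × Q)
  acc : Set Q

/-- `(q,ν) →^{δ,t} (q',ν')` for a transition `t = (q,g,R,q')` of the automaton. -/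
def TimedAuto.cstep {Q X : Type*} (A : TimedAuto Q X) (t : Q × Guard X × Set X × Q)
    (δ : ℝ) (c c' : Q × Val X) : Prop :=
  t ∈ A.trans ∧ c.1 = t.1 ∧ c'.1 = t.2.2.2 ∧ step t.2.1 t.2.2.1 δ c.2 c'.2


/-! ### Auxiliary lemmas for Statement 14 -/

/-- Transfer of the bound `r ≤ a` along equal floors and matching zero fractional parts. -/
lemma floor_bound_transfer {r s : ℝ} {a : ℕ} (hf : ⌊r⌋ = ⌊s⌋)
    (hz : Int.fract r = 0 → Int.fract s = 0) (hr : r ≤ (a : ℝ)) : s ≤ (a : ℝ) := by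
  have hfa : ⌊r⌋ ≤ (a : ℤ) := by
    have := Int.floor_le_floor hr
    simpa using this
  rcases lt_or_eq_of_le hfa with h | h
  · have : s < (⌊s⌋ : ℝ) + 1 := Int.lt_floor_add_one s
    have : s < ((⌊r⌋ : ℤ) : ℝ) + 1 := by rw [hf]; exact this
    have hle : ((⌊r⌋ : ℤ) : ℝ) + 1 ≤ (a : ℝ) := by exact_mod_cast h
    linarith
  · -- ⌊r⌋ = a, and r ≤ a, so r = a and fract r = 0
    have hra : ((a : ℤ) : ℝ) ≤ r := by rw [← h]; exact Int.floor_le r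
    have hreq : r = (a : ℝ) := le_antisymm hr (by exact_mod_cast hra)
    have hfr : Int.fract r = 0 := by
      rw [hreq]; exact_mod_cast Int.fract_natCast a
    have hfs : Int.fract s = 0 := hz hfr
    have : s = (⌊s⌋ : ℝ) := by
      have := Int.fract_add_floor s
      rw [hfs] at this; linarith
    rw [this, ← hf, h]; norm_cast

lemma regEq_bound {X : Type*} {α : X → ℕ} {v w : Val X} (h : regEq α v w) (x : X) :
    v x ≤ (α x : ℝ) ↔ w x ≤ (α x : ℝ) := by
  rcases h.1 x with ⟨h1, h2⟩ | ⟨hf, hz⟩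
  · constructor <;> intro hx
    · exact absurd hx (not_le.mpr h1)
    · exact absurd hx (not_le.mpr h2)
  · exact ⟨floor_bound_transfer hf hz.mp, floor_bound_transfer hf.symm hz.mpr⟩

lemma regEq_refl {X : Type*} (α : X → ℕ) (v : Val X) : regEq α v v :=
  ⟨fun x => Or.inr ⟨rfl, Iff.rfl⟩, fun _ _ _ _ => Iff.rfl⟩

lemma regEq_symm {X : Type*} {α : X → ℕ} {v w : Val X} (h : regEq α v w) : regEq α w v := by
  refine ⟨fun x => ?_, fun x y hx hy => ?_⟩
  · rcases h.1 x with ⟨h1, h2⟩ | ⟨hf, hz⟩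
    · exact Or.inl ⟨h2, h1⟩
    · exact Or.inr ⟨hf.symm, hz.symm⟩
  · exact ((h.2 x y ((regEq_bound h x).mpr hx) ((regEq_bound h y).mpr hy)).symm)

lemma regEq_trans {X : Type*} {α : X → ℕ} {u v w : Val X}
    (h1 : regEq α u v) (h2 : regEq α v w) : regEq α u w := by
  refine ⟨fun x => ?_, fun x y hx hy => ?_⟩
  · rcases h1.1 x with ⟨ha, hb⟩ | ⟨hf, hz⟩
    · refine Or.inl ⟨ha, ?_⟩
      have := (regEq_bound h2 x).not
      by_contra hle
      exact absurd ((regEq_bound h2 x).mpr (not_lt.mp hle)) (not_le.mpr hb)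
    · rcases h2.1 x with ⟨ha, hb⟩ | ⟨hf', hz'⟩
      · refine Or.inl ⟨?_, hb⟩
        by_contra hle
        exact absurd ((regEq_bound h1 x).mp (not_lt.mp hle)) (not_le.mpr ha)
      · exact Or.inr ⟨hf.trans hf', hz.trans hz'⟩
  · have hvx := (regEq_bound h1 x).mp hx
    have hvy := (regEq_bound h1 y).mp hy
    exact (h1.2 x y hx hy).trans (h2.2 x y hvx hvy)

lemma regEq_class_eq {X : Type*} {α : X → ℕ} {v v' : Val X} (h : regEq α v v') :
    { w | Nonneg w ∧ regEq α v w } = { w | Nonneg w ∧ regEq α v' w } := by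
  ext w
  exact ⟨fun ⟨hn, he⟩ => ⟨hn, regEq_trans (regEq_symm h) he⟩,
    fun ⟨hn, he⟩ => ⟨hn, regEq_trans h he⟩⟩

/-- The finite signature of a valuation. -/
def sigReg {X : Type*} [Fintype X] (α : X → ℕ) (v : Val X) :
    (X → Option (Fin (Finset.univ.sup α + 1) × Bool)) × (X → X → Bool) :=
  (fun x =>
    if h : v x ≤ (α x : ℝ) then
      some (⟨(⌊v x⌋).toNat, by
        have h1 : ⌊v x⌋ ≤ (α x : ℤ) := by
          have := Int.floor_le_floor h; simpa using this
        have h2 : (⌊v x⌋).toNat ≤ α x := Int.toNat_le.mpr h1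
        have h3 : α x ≤ Finset.univ.sup α := Finset.le_sup (Finset.mem_univ x)
        omega⟩, decide (Int.fract (v x) = 0))
    else none,
   fun x y => decide (v x ≤ (α x : ℝ) ∧ v y ≤ (α y : ℝ) ∧ Int.fract (v x) ≤ Int.fract (v y)))

lemma sigReg_fst_bound {X : Type*} [Fintype X] {α : X → ℕ} {v w : Val X}
    (h : (sigReg α v).1 = (sigReg α w).1) (x : X) :
    v x ≤ (α x : ℝ) ↔ w x ≤ (α x : ℝ) := by
  have hx := congrFun h x
  simp only [sigReg] at hx
  constructor <;> intro hle <;> by_contra hnle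
  · rw [dif_pos hle, dif_neg hnle] at hx; cases hx
  · rw [dif_neg hnle, dif_pos hle] at hx; cases hx

lemma sigReg_eq_iff {X : Type*} [Fintype X] {α : X → ℕ} {v w : Val X}
    (hv : Nonneg v) (hw : Nonneg w) : sigReg α v = sigReg α w ↔ regEq α v w := by
  constructor
  · intro h
    have h1 := congrArg Prod.fst h
    have h2 := congrArg Prod.snd h
    refine ⟨fun x => ?_, fun x y hx hy => ?_⟩
    · by_cases hx : v x ≤ (α x : ℝ)
      · have hwx : w x ≤ (α x : ℝ) := (sigReg_fst_bound h1 x).mp hx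
        have hx' := congrFun h1 x
        simp only [sigReg, dif_pos hx, dif_pos hwx, Option.some.injEq, Prod.mk.injEq,
          Fin.mk.injEq, decide_eq_decide] at hx'
        refine Or.inr ⟨?_, hx'.2⟩
        have hv0 : 0 ≤ ⌊v x⌋ := Int.floor_nonneg.mpr (hv x)
        have hw0 : 0 ≤ ⌊w x⌋ := Int.floor_nonneg.mpr (hw x)
        omega
      · have hwx : ¬ w x ≤ (α x : ℝ) := fun hc => hx ((sigReg_fst_bound h1 x).mpr hc)
        exact Or.inl ⟨not_le.mp hx, not_le.mp hwx⟩
    · have hwx : w x ≤ (α x : ℝ) := (sigReg_fst_bound h1 x).mp hx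
      have hwy : w y ≤ (α y : ℝ) := (sigReg_fst_bound h1 y).mp hy
      have h2' := congrFun (congrFun h2 x) y
      simp only [sigReg, decide_eq_decide] at h2'
      constructor <;> intro hle
      · exact (h2'.mp ⟨hx, hy, hle⟩).2.2
      · exact (h2'.mpr ⟨hwx, hwy, hle⟩).2.2
  · intro h
    have hb := regEq_bound h
    refine Prod.ext ?_ ?_
    · funext x
      simp only [sigReg]
      by_cases hx : v x ≤ (α x : ℝ)
      · have hwx : w x ≤ (α x : ℝ) := (hb x).mp hx
        rw [dif_pos hx, dif_pos hwx]
        rcases h.1 x with ⟨ha, _⟩ | ⟨hf, hz⟩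
        · exact absurd hx (not_le.mpr ha)
        · simp only [Option.some.injEq, Prod.mk.injEq, Fin.mk.injEq, decide_eq_decide]
          exact ⟨by omega, hz⟩
      · rw [dif_neg hx, dif_neg (fun hc => hx ((hb x).mpr hc))]
    · funext x y
      simp only [sigReg, decide_eq_decide]
      constructor
      · rintro ⟨hx, hy, hle⟩
        exact ⟨(hb x).mp hx, (hb y).mp hy, (h.2 x y hx hy).mp hle⟩
      · rintro ⟨hx, hy, hle⟩
        have hvx := (hb x).mpr hx
        have hvy := (hb y).mpr hy
        exact ⟨hvx, hvy, (h.2 x y hvx hvy).mpr hle⟩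

/-- The regions w.r.t. `α` form a finite partition of the set of all
clock valuations: pairwise disjoint, covering, non-empty, and finitely many. -/
theorem stmt14 {X : Type*} [Fintype X] (α : X → ℕ) :
    (∀ R R' : Set (Val X), IsRegion α R → IsRegion α R' → R ≠ R' → Disjoint R R') ∧
    (∀ v : Val X, Nonneg v → ∃ R : Set (Val X), IsRegion α R ∧ v ∈ R) ∧
    (∀ R : Set (Val X), IsRegion α R → R.Nonempty) ∧
    { R : Set (Val X) | IsRegion α R }.Finite := by
  refine ⟨?_, ?_, ?_, ?_⟩
  · rintro R R' ⟨v, hv, rfl⟩ ⟨v', hv', rfl⟩ hne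
    rw [Set.disjoint_left]
    rintro u ⟨hun, hu⟩ ⟨_, hu'⟩
    exact hne (regEq_class_eq (regEq_trans hu (regEq_symm hu')))
  · intro v hv
    exact ⟨_, ⟨v, hv, rfl⟩, hv, regEq_refl α v⟩
  · rintro R ⟨v, hv, rfl⟩
    exact ⟨v, hv, regEq_refl α v⟩
  · set S := { R : Set (Val X) | IsRegion α R } with hS
    have hchoice : ∀ R : S, ∃ v : Val X, Nonneg v ∧ (R : Set (Val X)) = { w | Nonneg w ∧ regEq α v w } :=
      fun R => R.2
    choose g hg1 hg2 using hchoice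
    have hinj : Function.Injective (fun R : S => sigReg α (g R)) := by
      intro R R' heq
      have hreg : regEq α (g R) (g R') := (sigReg_eq_iff (hg1 R) (hg1 R')).mp heq
      have : (R : Set (Val X)) = (R' : Set (Val X)) := by
        rw [hg2 R, hg2 R', regEq_class_eq hreg]
      exact Subtype.ext this
    have : Finite S := Finite.of_injective _ hinj
    exact Set.finite_coe_iff.mp this


end TAform

end
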